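/- Let (p_i)_{3≤i≤k} with all p_i > 1 and let (u^k_j)_{j≥1} be the nondecreasing enumeration with multiplicity of {∏_{i=3}^{k} p_i^{α_i} : α_i ≥ 0}. Then the multiset {u^k_l : 1 ≤ l ≤ n} decomposes as the disjoint union of {u^{k−1}_l : 1 ≤ l ≤ j} and {p_k·u^k_l : 1 ≤ l ≤ n−j}, where j is the number of indices l ≤ n for which u^k_l arises from a tuple with α_k = 0 (equivalently, j is the largest index with k_j ≤ n). -/

import Mathlib

/-- `u` (on indices ≥ 1) is a nondecreasing enumeration, with multiplicity,
of all products ∏_{i=3}^{k} p_i^{α_i} with α_i ≥ 0. -/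
def IsSmoothEnum (p : ℕ → ℕ) (k : ℕ) (u : ℕ → ℕ) : Prop :=
  (∀ j, 1 ≤ j → u j ≤ u (j + 1)) ∧
  ∃ e : {j : ℕ // 1 ≤ j} ≃ (Finset.Icc 3 k → ℕ),
    ∀ j : {j : ℕ // 1 ≤ j}, u j.1 = ∏ i : (Finset.Icc 3 k : Finset ℕ), p i.1 ^ e j i


lemma mono_of_step (u : ℕ → ℕ) (h : ∀ j, 1 ≤ j → u j ≤ u (j+1)) :
    ∀ a b, 1 ≤ a → a ≤ b → u a ≤ u b := by
  intro a b ha hab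
  induction b, hab using Nat.le_induction with
  | base => exact le_refl _
  | succ m hm ih => exact ih.trans (h m (ha.trans hm))

noncomputable def cntA (u : ℕ → ℕ) (x : ℕ) : ℕ := {l : ℕ | 1 ≤ l ∧ u l ≤ x}.ncard

lemma count_iff (u : ℕ → ℕ) (hm : ∀ a b, 1 ≤ a → a ≤ b → u a ≤ u b)
    (x : ℕ) (hfin : {l : ℕ | 1 ≤ l ∧ u l ≤ x}.Finite) (l : ℕ) (hl : 1 ≤ l) :
    u l ≤ x ↔ l ≤ cntA u x := by
  rw [cntA]
  constructor
  · intro h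
    have hsub : Set.Icc 1 l ⊆ {l : ℕ | 1 ≤ l ∧ u l ≤ x} := by
      intro m hmem
      exact ⟨hmem.1, (hm m l hmem.1 hmem.2).trans h⟩
    have : (Set.Icc 1 l).ncard ≤ _ := Set.ncard_le_ncard hsub hfin
    have hIcc : (Set.Icc 1 l).ncard = l := by
      rw [← Finset.coe_Icc, Set.ncard_coe_finset, Nat.card_Icc]
      omega
    omega
  · intro h
    by_contra hx
    push_neg at hx
    have hsub : {l : ℕ | 1 ≤ l ∧ u l ≤ x} ⊆ Set.Icc 1 (l-1) := by
      intro m hmem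
      refine ⟨hmem.1, ?_⟩
      by_contra hml
      push_neg at hml
      have : u l ≤ u m := hm l m hl (by omega)
      have := hmem.2
      omega
    have h2 : _ ≤ (Set.Icc 1 (l-1)).ncard := Set.ncard_le_ncard hsub (by
      rw [← Finset.coe_Icc]; exact (Finset.Icc 1 (l-1)).finite_toSet)
    have hIcc : (Set.Icc 1 (l-1)).ncard = l - 1 := by
      rw [← Finset.coe_Icc, Set.ncard_coe_finset, Nat.card_Icc]
      omega
    omega

lemma count_prefix (u : ℕ → ℕ) (hpos : ∀ l, 1 ≤ l → 1 ≤ u l)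
    (Af : ℕ → ℕ) (hiff : ∀ l x, 1 ≤ l → (u l ≤ x ↔ l ≤ Af x)) (n v : ℕ) :
    Multiset.count v ((Finset.Icc 1 n).val.map u) = min n (Af v) - min n (Af (v-1)) := by
  rw [Multiset.count_map, ← Finset.filter_val, Finset.card_val]
  rcases Nat.eq_zero_or_pos v with rfl | hv
  · have : (Finset.Icc 1 n).filter (fun a => 0 = u a) = ∅ := by
      apply Finset.filter_false_of_mem
      intro a ha
      have := hpos a (Finset.mem_Icc.mp ha).1
      omega
    simp [this]
  · have heq : (Finset.Icc 1 n).filter (fun a => v = u a)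
        = Finset.Ioc (min n (Af (v-1))) (min n (Af v)) := by
      ext l
      simp only [Finset.mem_filter, Finset.mem_Icc, Finset.mem_Ioc]
      constructor
      · rintro ⟨⟨h1, h2⟩, rfl⟩
        have hA : l ≤ Af (u l) := (hiff l (u l) h1).mp le_rfl
        have hA' : ¬ l ≤ Af (u l - 1) := by
          intro hc
          have := (hiff l (u l - 1) h1).mpr hc
          omega
        omega
      · rintro ⟨hl1, hl2⟩
        have h1 : 1 ≤ l := by omega
        have h2 : l ≤ n := by omega
        have hle : u l ≤ v := (hiff l v h1).mpr (by omega)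
        have hgt : ¬ u l ≤ v - 1 := by
          intro hc
          have := (hiff l (v-1) h1).mp hc
          omega
        exact ⟨⟨h1, h2⟩, by omega⟩
    rw [heq, Nat.card_Ioc]

lemma idx_transfer {σ : Type*} (u : ℕ → ℕ) (v : σ → ℕ) (e : {j : ℕ // 1 ≤ j} ≃ σ)
    (he : ∀ j, u j.1 = v (e j)) (Q : ℕ → Prop) (hfin : {s : σ | Q (v s)}.Finite) :
    {l : ℕ | 1 ≤ l ∧ Q (u l)}.Finite ∧
    {l : ℕ | 1 ≤ l ∧ Q (u l)}.ncard = {s : σ | Q (v s)}.ncard := by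
  classical
  set f : ℕ → σ := fun l => if h : 1 ≤ l then e ⟨l, h⟩ else e ⟨1, le_rfl⟩ with hf
  have hinj : Set.InjOn f {l : ℕ | 1 ≤ l ∧ Q (u l)} := by
    intro a ha b hb hab
    simp only [hf, dif_pos ha.1, dif_pos hb.1] at hab
    have := e.injective hab
    exact congrArg Subtype.val this
  have himg : f '' {l : ℕ | 1 ≤ l ∧ Q (u l)} = {s : σ | Q (v s)} := by
    ext s
    simp only [Set.mem_image, Set.mem_setOf_eq]
    constructor
    · rintro ⟨l, ⟨hl, hQ⟩, rfl⟩
      simp only [hf, dif_pos hl]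
      rw [← he ⟨l, hl⟩]
      exact hQ
    · intro hs
      refine ⟨(e.symm s).1, ⟨(e.symm s).2, ?_⟩, ?_⟩
      · have h1 := he (e.symm s)
        rw [Equiv.apply_symm_apply] at h1
        rw [h1]
        exact hs
      · simp only [hf, dif_pos (e.symm s).2]
        rw [show (⟨(e.symm s).1, (e.symm s).2⟩ : {j : ℕ // 1 ≤ j}) = e.symm s from rfl,
          Equiv.apply_symm_apply]
  constructor
  · exact Set.Finite.of_finite_image (himg ▸ hfin) hinj
  · rw [← himg, Set.ncard_image_of_injOn hinj]

lemma kmem {k : ℕ} (hk : 4 ≤ k) : k ∈ Finset.Icc 3 k := Finset.mem_Icc.mpr ⟨by omega, le_rfl⟩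

lemma inclmem {k i : ℕ} (hi : i ∈ Finset.Icc 3 (k-1)) : i ∈ Finset.Icc 3 k := by
  rw [Finset.mem_Icc] at *; omega

def updF (k : ℕ) (α : (Finset.Icc 3 k : Finset ℕ) → ℕ) (m : ℕ) :
    (Finset.Icc 3 k : Finset ℕ) → ℕ := fun i => if i.1 = k then m else α i

def resF (k : ℕ) (α : (Finset.Icc 3 k : Finset ℕ) → ℕ) :
    (Finset.Icc 3 (k-1) : Finset ℕ) → ℕ := fun i => α ⟨i.1, inclmem i.2⟩

def extF (k : ℕ) (β : (Finset.Icc 3 (k-1) : Finset ℕ) → ℕ) :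
    (Finset.Icc 3 k : Finset ℕ) → ℕ :=
  fun i => if h : i.1 ∈ Finset.Icc 3 (k-1) then β ⟨i.1, h⟩ else 0

lemma updF_k {k : ℕ} (hk : 4 ≤ k) (α) (m : ℕ) : updF k α m ⟨k, kmem hk⟩ = m := if_pos rfl

lemma resF_updF {k : ℕ} (hk : 4 ≤ k) (α) (m : ℕ) : resF k (updF k α m) = resF k α := by
  funext i
  have : i.1 ≠ k := by have := Finset.mem_Icc.mp i.2; omega
  simp [resF, updF, this]

lemma updF_updF {k : ℕ} (α) (m m' : ℕ) : updF k (updF k α m) m' = updF k α m' := by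
  funext i; simp only [updF]; split <;> rfl

lemma updF_self {k : ℕ} (hk : 4 ≤ k := by omega) (α) : updF k α (α ⟨k, kmem hk⟩) = α := by
  funext i
  simp only [updF]
  split
  · next h => congr 1; exact Subtype.ext h.symm
  · rfl

lemma extF_k {k : ℕ} (hk : 4 ≤ k) (β) : extF k β ⟨k, kmem hk⟩ = 0 := by
  have : k ∉ Finset.Icc 3 (k-1) := by rw [Finset.mem_Icc]; omega
  simp [extF, this]

lemma resF_extF {k : ℕ} (hk : 4 ≤ k) (β) : resF k (extF k β) = β := by
  funext i
  simp [resF, extF, i.2]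

lemma extF_resF {k : ℕ} (hk : 4 ≤ k) (α) (h0 : α ⟨k, kmem hk⟩ = 0) :
    extF k (resF k α) = α := by
  funext i
  simp only [extF, resF]
  split
  · congr 1
  · next h =>
    have hik : i.1 = k := by
      have h1 := Finset.mem_Icc.mp i.2
      rw [Finset.mem_Icc] at h
      omega
    rw [show i = (⟨k, kmem hk⟩ : (Finset.Icc 3 k : Finset ℕ)) from Subtype.ext hik, h0]

lemma extF_inj {k : ℕ} (hk : 4 ≤ k) : Function.Injective (extF k) := by
  intro a b h
  rw [← resF_extF hk a, ← resF_extF hk b, h]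

lemma prod_split (p : ℕ → ℕ) (k : ℕ) (hk : 4 ≤ k)
    (α : (Finset.Icc 3 k : Finset ℕ) → ℕ) :
    ∏ i, p i.1 ^ α i =
      p k ^ (α ⟨k, kmem hk⟩) * ∏ i, p i.1 ^ resF k α i := by
  classical
  set g : ℕ → ℕ := fun i => if h : i ∈ Finset.Icc 3 k then p i ^ α ⟨i, h⟩ else 1 with hg
  have step1 : ∏ i, p i.1 ^ α i = ∏ i ∈ Finset.Icc 3 k, g i := by
    rw [← Finset.prod_attach (Finset.Icc 3 k) g, Finset.univ_eq_attach]
    apply Finset.prod_congr rfl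
    intro i _
    simp only [hg, i.2, dif_pos]
  have hins : Finset.Icc 3 k = insert k (Finset.Icc 3 (k-1)) := by
    ext i
    simp only [Finset.mem_Icc, Finset.mem_insert]
    omega
  have hnotmem : k ∉ Finset.Icc 3 (k-1) := by simp only [Finset.mem_Icc]; omega
  have step2 : ∏ i ∈ Finset.Icc 3 k, g i = g k * ∏ i ∈ Finset.Icc 3 (k-1), g i := by
    rw [hins, Finset.prod_insert hnotmem]
  rw [step1, step2]
  congr 1
  · simp only [hg, kmem hk, dif_pos]
  · rw [← Finset.prod_attach (Finset.Icc 3 (k-1)) g, Finset.univ_eq_attach]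
    apply Finset.prod_congr rfl
    intro i _
    simp only [hg, inclmem i.2, dif_pos, resF]

lemma prod_updF (p : ℕ → ℕ) {k : ℕ} (hk : 4 ≤ k) (α) (m : ℕ) :
    ∏ i, p i.1 ^ (updF k α m) i = p k ^ m * ∏ i, p i.1 ^ resF k α i := by
  rw [prod_split p k hk, updF_k hk, resF_updF hk]

lemma prod_extF (p : ℕ → ℕ) {k : ℕ} (hk : 4 ≤ k) (β) :
    ∏ i, p i.1 ^ (extF k β) i = ∏ i, p i.1 ^ β i := by
  rw [prod_split p k hk, extF_k hk, resF_extF hk, pow_zero, one_mul]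

lemma tuple_finite (p : ℕ → ℕ) (k : ℕ) (hp2 : ∀ i ∈ Finset.Icc 3 k, 2 ≤ p i) (x : ℕ) :
    {α : (Finset.Icc 3 k : Finset ℕ) → ℕ | ∏ i, p i.1 ^ α i ≤ x}.Finite := by
  apply Set.Finite.subset (Set.Finite.pi (fun _ : (Finset.Icc 3 k : Finset ℕ) => Set.finite_Iic x))
  intro α hα
  simp only [Set.mem_setOf_eq] at hα
  intro i _
  simp only [Set.mem_Iic]
  have h1 : p i.1 ^ α i ≤ ∏ i', p i'.1 ^ α i' := by
    apply Finset.single_le_prod' (f := fun i' : (Finset.Icc 3 k : Finset ℕ) => p i'.1 ^ α i')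
    · intro i' _
      exact Nat.one_le_pow _ _ (by have := hp2 i'.1 i'.2; omega)
    · exact Finset.mem_univ i
  have h2 : α i < 2 ^ α i := Nat.lt_two_pow_self
  have h3 : 2 ^ α i ≤ p i.1 ^ α i := Nat.pow_le_pow_left (hp2 i.1 i.2) _
  omega

lemma card_split (p : ℕ → ℕ) (k : ℕ) (hk : 4 ≤ k)
    (hp2 : ∀ i ∈ Finset.Icc 3 k, 2 ≤ p i) (x : ℕ) :
    {α : (Finset.Icc 3 k : Finset ℕ) → ℕ | ∏ i, p i.1 ^ α i ≤ x}.ncard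
      = {β : (Finset.Icc 3 (k-1) : Finset ℕ) → ℕ | ∏ i, p i.1 ^ β i ≤ x}.ncard
      + {α : (Finset.Icc 3 k : Finset ℕ) → ℕ | p k * ∏ i, p i.1 ^ α i ≤ x}.ncard := by
  classical
  set K0 : (Finset.Icc 3 k : Finset ℕ) := ⟨k, kmem hk⟩ with hK0
  set S := {α : (Finset.Icc 3 k : Finset ℕ) → ℕ | ∏ i, p i.1 ^ α i ≤ x} with hS
  set S0 := {α : (Finset.Icc 3 k : Finset ℕ) → ℕ | ∏ i, p i.1 ^ α i ≤ x ∧ α K0 = 0} with hS0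
  set S1 := {α : (Finset.Icc 3 k : Finset ℕ) → ℕ | ∏ i, p i.1 ^ α i ≤ x ∧ α K0 ≠ 0} with hS1
  have hfin : S.Finite := tuple_finite p k hp2 x
  have hfin0 : S0.Finite := hfin.subset (fun α hα => hα.1)
  have hfin1 : S1.Finite := hfin.subset (fun α hα => hα.1)
  have hunion : S = S0 ∪ S1 := by
    ext α; simp only [hS, hS0, hS1, Set.mem_setOf_eq, Set.mem_union]; tauto
  have hdisj : Disjoint S0 S1 := by
    rw [Set.disjoint_left]; intro α h0 h1; exact h1.2 h0.2
  rw [hunion, Set.ncard_union_eq hdisj hfin0 hfin1]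
  congr 1
  · -- S0 = extF '' Bset
    have himg : S0 = extF k '' {β : (Finset.Icc 3 (k-1) : Finset ℕ) → ℕ | ∏ i, p i.1 ^ β i ≤ x} := by
      ext α
      simp only [hS0, Set.mem_setOf_eq, Set.mem_image]
      constructor
      · rintro ⟨h1, h2⟩
        refine ⟨resF k α, ?_, extF_resF hk α h2⟩
        have := prod_split p k hk α
        rw [h2, pow_zero, one_mul] at this
        rw [← this]; exact h1
      · rintro ⟨β, hβ, rfl⟩
        exact ⟨by rw [prod_extF p hk]; exact hβ, extF_k hk β⟩
    rw [himg, Set.ncard_image_of_injective _ (extF_inj hk)]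
  · -- S1 = inc '' Cset
    set inc : ((Finset.Icc 3 k : Finset ℕ) → ℕ) → ((Finset.Icc 3 k : Finset ℕ) → ℕ) :=
      fun α => updF k α (α K0 + 1) with hinc
    have hincinj : Function.Injective inc := by
      intro a b hab
      have h0 : a K0 = b K0 := by
        have := congrFun hab K0
        simp only [hinc, show ∀ (β : (Finset.Icc 3 k : Finset ℕ) → ℕ) (m : ℕ), updF k β m K0 = m from fun β m => updF_k hk β m] at this
        omega
      calc a = updF k (inc a) (a K0) := by rw [hinc, updF_updF, updF_self hk]
        _ = updF k (inc b) (b K0) := by rw [hab, h0]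
        _ = b := by rw [hinc, updF_updF, updF_self hk]
    have himg : S1 = inc '' {α : (Finset.Icc 3 k : Finset ℕ) → ℕ | p k * ∏ i, p i.1 ^ α i ≤ x} := by
      ext α
      simp only [hS1, Set.mem_setOf_eq, Set.mem_image]
      constructor
      · rintro ⟨h1, h2⟩
        refine ⟨updF k α (α K0 - 1), ?_, ?_⟩
        · rw [prod_updF p hk]
          have hps : p k * (p k ^ (α K0 - 1) * ∏ i, p i.1 ^ resF k α i)
              = p k ^ (α K0 - 1 + 1) * ∏ i, p i.1 ^ resF k α i := by
            rw [pow_succ']; ring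
          rw [hps, show α K0 - 1 + 1 = α K0 by omega, ← prod_split p k hk]
          exact h1
        · rw [hinc]
          simp only [show ∀ (β : (Finset.Icc 3 k : Finset ℕ) → ℕ) (m : ℕ), updF k β m K0 = m from fun β m => updF_k hk β m]
          rw [updF_updF, show α K0 - 1 + 1 = α K0 by omega, updF_self hk]
      · rintro ⟨α', hα', rfl⟩
        constructor
        · rw [hinc]
          simp only
          rw [prod_updF p hk, pow_succ', mul_assoc, ← prod_split p k hk]
          exact hα'
        · rw [hinc]
          simp only [show ∀ (β : (Finset.Icc 3 k : Finset ℕ) → ℕ) (m : ℕ), updF k β m K0 = m from fun β m => updF_k hk β m]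
          omega
    rw [himg, Set.ncard_image_of_injective _ hincinj]

set_option maxHeartbeats 1000000 in
/-- The multiset {u^k_l : 1 ≤ l ≤ n} decomposes as the disjoint union of
{u^{k−1}_l : 1 ≤ l ≤ j} and {p_k·u^k_l : 1 ≤ l ≤ n−j}, where j is the largest
index with k_j ≤ n. -/
theorem smooth_enum_multiset_decomposition
    (p : ℕ → ℕ) (k : ℕ) (hk : 4 ≤ k)
    (hp : ∀ i, 3 ≤ i → i ≤ k → 1 < p i)
    (uk uk1 : ℕ → ℕ)
    (huk : IsSmoothEnum p k uk) (huk1 : IsSmoothEnum p (k - 1) uk1)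
    (K : ℕ → ℕ) (hK1 : K 1 = 1)
    (hK : ∀ j, 2 ≤ j → K j = sInf {l | K (j - 1) < l ∧ uk l = uk1 j})
    (n j : ℕ) (hj : 1 ≤ j) (h1 : K j ≤ n) (h2 : n < K (j + 1)) :
    (Finset.Icc 1 n).val.map uk =
      (Finset.Icc 1 j).val.map uk1 +
      (Finset.Icc 1 (n - j)).val.map (fun l => p k * uk l) := by
  classical
  obtain ⟨hstep, e, he⟩ := huk
  obtain ⟨hstep1, e1, he1⟩ := huk1
  have hp2 : ∀ i ∈ Finset.Icc 3 k, 2 ≤ p i := by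
    intro i hi
    rw [Finset.mem_Icc] at hi
    have := hp i hi.1 hi.2
    omega
  have hp2' : ∀ i ∈ Finset.Icc 3 (k-1), 2 ≤ p i := fun i hi => hp2 i (inclmem hi)
  have hpk : 2 ≤ p k := hp2 k (kmem hk)
  have hmono := mono_of_step uk hstep
  have hmono1 := mono_of_step uk1 hstep1
  have hmonoC : ∀ a b, 1 ≤ a → a ≤ b → p k * uk a ≤ p k * uk b :=
    fun a b ha hab => Nat.mul_le_mul_left _ (hmono a b ha hab)
  have hpos : ∀ l, 1 ≤ l → 1 ≤ uk l := by
    intro l hl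
    rw [he ⟨l, hl⟩]
    refine Nat.succ_le_of_lt ?_
    apply Finset.prod_pos
    intro i _
    exact pow_pos (by have := hp2 i.1 i.2; omega) _
  have hpos1 : ∀ l, 1 ≤ l → 1 ≤ uk1 l := by
    intro l hl
    rw [he1 ⟨l, hl⟩]
    refine Nat.succ_le_of_lt ?_
    apply Finset.prod_pos
    intro i _
    exact pow_pos (by have := hp2' i.1 i.2; omega) _
  have hposC : ∀ l, 1 ≤ l → 1 ≤ p k * uk l := by
    intro l hl
    have h1 := hpos l hl
    exact Nat.one_le_iff_ne_zero.mpr (Nat.mul_ne_zero (by omega) (by omega))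
  have hfinT : ∀ x, {α : (Finset.Icc 3 k : Finset ℕ) → ℕ | ∏ i, p i.1 ^ α i ≤ x}.Finite :=
    tuple_finite p k hp2
  have hfinT1 : ∀ x, {β : (Finset.Icc 3 (k-1) : Finset ℕ) → ℕ | ∏ i, p i.1 ^ β i ≤ x}.Finite :=
    tuple_finite p (k-1) hp2'
  have hfinTC : ∀ x, {α : (Finset.Icc 3 k : Finset ℕ) → ℕ | p k * ∏ i, p i.1 ^ α i ≤ x}.Finite := by
    intro x
    apply (hfinT x).subset
    intro α hα
    simp only [Set.mem_setOf_eq] at *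
    have hle : ∏ i, p i.1 ^ α i ≤ p k * ∏ i, p i.1 ^ α i :=
      Nat.le_mul_of_pos_left _ (by omega)
    omega
  have tA := fun x => idx_transfer uk (fun α => ∏ i, p i.1 ^ α i) e he (fun y => y ≤ x) (hfinT x)
  have tB := fun x => idx_transfer uk1 (fun β => ∏ i, p i.1 ^ β i) e1 he1 (fun y => y ≤ x) (hfinT1 x)
  have tC := fun x => idx_transfer uk (fun α => ∏ i, p i.1 ^ α i) e he
    (fun y => p k * y ≤ x) (hfinTC x)
  have hiffA : ∀ l x, 1 ≤ l → (uk l ≤ x ↔ l ≤ cntA uk x) :=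
    fun l x hl => count_iff uk hmono x (tA x).1 l hl
  have hiffB : ∀ l x, 1 ≤ l → (uk1 l ≤ x ↔ l ≤ cntA uk1 x) :=
    fun l x hl => count_iff uk1 hmono1 x (tB x).1 l hl
  have hiffC : ∀ l x, 1 ≤ l → (p k * uk l ≤ x ↔ l ≤ cntA (fun l => p k * uk l) x) :=
    fun l x hl => count_iff (fun l => p k * uk l) hmonoC x (tC x).1 l hl
  have hABC : ∀ x, cntA uk x = cntA uk1 x + cntA (fun l => p k * uk l) x := by
    intro x
    have hh1 : cntA uk x = _ := (tA x).2
    have hh2 : cntA uk1 x = _ := (tB x).2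
    have hh3 : cntA (fun l => p k * uk l) x = _ := (tC x).2
    rw [hh1, hh2, hh3]
    exact card_split p k hk hp2 x
  have hBmono : ∀ x y, x ≤ y → cntA uk1 x ≤ cntA uk1 y :=
    fun x y hxy => Set.ncard_le_ncard (fun l hl => ⟨hl.1, hl.2.trans hxy⟩) (tB y).1
  have hCmono : ∀ x y, x ≤ y →
      cntA (fun l => p k * uk l) x ≤ cntA (fun l => p k * uk l) y :=
    fun x y hxy => Set.ncard_le_ncard (fun l hl => ⟨hl.1, hl.2.trans hxy⟩) (tC y).1
  have hA0 : cntA uk 0 = 0 := by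
    have hempty : {l : ℕ | 1 ≤ l ∧ uk l ≤ 0} = ∅ := by
      ext l
      simp only [Set.mem_setOf_eq, Set.mem_empty_iff_false, iff_false, not_and]
      intro hl
      have := hpos l hl
      omega
    rw [cntA, hempty, Set.ncard_empty]
  have hB0 : cntA uk1 0 = 0 := by
    have hempty : {l : ℕ | 1 ≤ l ∧ uk1 l ≤ 0} = ∅ := by
      ext l
      simp only [Set.mem_setOf_eq, Set.mem_empty_iff_false, iff_false, not_and]
      intro hl
      have := hpos1 l hl
      omega
    rw [cntA, hempty, Set.ncard_empty]
  have huk11 : uk1 1 = 1 := by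
    have h0 := he1 (e1.symm (fun _ => 0))
    rw [Equiv.apply_symm_apply] at h0
    simp only [pow_zero, Finset.prod_const_one] at h0
    have hle : uk1 1 ≤ uk1 (e1.symm (fun _ => 0)).1 :=
      hmono1 1 _ le_rfl (e1.symm (fun _ => 0)).2
    have := hpos1 1 le_rfl
    omega
  have Kform : ∀ m, 1 ≤ m →
      cntA uk1 (uk1 m - 1) < m ∧ K m = cntA uk (uk1 m - 1) + (m - cntA uk1 (uk1 m - 1)) := by
    intro m hm
    induction m, hm using Nat.le_induction with
    | base =>
      rw [huk11]
      simp only [Nat.sub_self]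
      rw [hA0, hB0, hK1]
      exact ⟨by omega, by omega⟩
    | succ m hm ih =>
      obtain ⟨ihlt, ihK⟩ := ih
      set v' := uk1 m with hv'
      set v := uk1 (m+1) with hv
      have hv'le : v' ≤ v := hmono1 m (m+1) hm (Nat.le_succ m)
      have hv1 : 1 ≤ v := hpos1 (m+1) (by omega)
      have hv'1 : 1 ≤ v' := hpos1 m hm
      have hBlt : cntA uk1 (v - 1) < m + 1 := by
        by_contra hc
        push_neg at hc
        have := (hiffB (m+1) (v-1) (by omega)).mpr hc
        omega
      have hABCv1 := hABC (v - 1)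
      have hABCv'1 := hABC (v' - 1)
      have hCmono' : cntA (fun l => p k * uk l) (v' - 1) ≤ cntA (fun l => p k * uk l) (v - 1) :=
        hCmono _ _ (by omega)
      set t := cntA uk (v-1) + (m + 1 - cntA uk1 (v-1)) with ht
      have hKmt : K m < t := by omega
      have ht1 : 1 ≤ t := by omega
      have htle : uk t = v := by
        have hBv : m + 1 ≤ cntA uk1 v := (hiffB (m+1) v (by omega)).mp (le_of_eq hv.symm)
        have hABCv := hABC v
        have hCm2 : cntA (fun l => p k * uk l) (v-1) ≤ cntA (fun l => p k * uk l) v :=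
          hCmono _ _ (by omega)
        have hu1 : uk t ≤ v := (hiffA t v ht1).mpr (by omega)
        have hu2 : ¬ uk t ≤ v - 1 := by
          intro hc
          have := (hiffA t (v-1) ht1).mp hc
          omega
        omega
      have hlb : ∀ l, K m < l → uk l = v → t ≤ l := by
        intro l hKl hul
        have hl1 : 1 ≤ l := by omega
        have hgtA : ¬ l ≤ cntA uk (v-1) := by
          intro hc
          have := (hiffA l (v-1) hl1).mpr hc
          omega
        by_cases hcase : cntA uk1 (v-1) < m
        · have hv'gt : ¬ uk1 m ≤ v - 1 := by
            intro hc
            have := (hiffB m (v-1) hm).mp hc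
            omega
          have hv'eq : v' = v := by omega
          rw [hv'eq] at ihK ihlt
          omega
        · omega
      refine ⟨hBlt, ?_⟩
      rw [hK (m+1) (by omega)]
      simp only [Nat.add_sub_cancel]
      apply le_antisymm
      · exact Nat.sInf_le ⟨hKmt, htle⟩
      · exact le_csInf ⟨t, hKmt, htle⟩ (fun b hb => hlb b hb.1 hb.2)
  obtain ⟨hBwlt, hKj⟩ := Kform j hj
  obtain ⟨hBw'lt, hKj1⟩ := Kform (j+1) (by omega)
  have hww' : uk1 j ≤ uk1 (j+1) := hmono1 j (j+1) hj (Nat.le_succ j)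
  have hw1 : 1 ≤ uk1 j := hpos1 j hj
  have hABCw := hABC (uk1 j - 1)
  have hABCw' := hABC (uk1 (j+1) - 1)
  have hjn : j ≤ n := by omega
  have star : ∀ v, min n (cntA uk v) = min j (cntA uk1 v)
      + min (n-j) (cntA (fun l => p k * uk l) v) := by
    intro v
    have hABCv := hABC v
    by_cases hc1 : j ≤ cntA uk1 v
    · by_cases hc2 : j + 1 ≤ cntA uk1 v
      · have hwv : uk1 (j+1) ≤ v := (hiffB (j+1) v (by omega)).mpr hc2
        have hCle : cntA (fun l => p k * uk l) (uk1 (j+1) - 1)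
            ≤ cntA (fun l => p k * uk l) v := hCmono _ _ (by omega)
        omega
      · omega
    · have hwv : ¬ uk1 j ≤ v := by
        intro hcon
        exact hc1 ((hiffB j v hj).mp hcon)
      have hCle : cntA (fun l => p k * uk l) v
          ≤ cntA (fun l => p k * uk l) (uk1 j - 1) := hCmono _ _ (by omega)
      omega
  refine Multiset.ext.mpr fun v => ?_
  rw [Multiset.count_add, count_prefix uk hpos (cntA uk) hiffA n v,
    count_prefix uk1 hpos1 (cntA uk1) hiffB j v,
    count_prefix (fun l => p k * uk l) hposC (cntA (fun l => p k * uk l)) hiffC (n-j) v]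
  have hs1 := star v
  have hs2 := star (v-1)
  have hBm : cntA uk1 (v-1) ≤ cntA uk1 v := hBmono _ _ (by omega)
  have hCm : cntA (fun l => p k * uk l) (v-1) ≤ cntA (fun l => p k * uk l) v :=
    hCmono _ _ (by omega)
  omega
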